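/- Every finite graph that has an even number of edges and contains no K_4 (complete graph on four vertices) as a subgraph is even-decomposable. -/
import Mathlib


/-- Number of edges of the induced subgraph of `G` on the vertex set `S`. -/
noncomputable def edgesIn {V : Type*} (G : SimpleGraph V) (S : Set V) : ℕ :=
  {e ∈ G.edgeSet | ∀ v ∈ e, v ∈ S}.ncard

/-- A graph is even-decomposable if there is a sequence `univ = V_0 ⊃ V_1 ⊃ ⋯ ⊃ V_k = ∅`
such that each induced subgraph `G[V_i]` has an even number of edges and each difference
`V_i \ V_{i+1}` is an independent set. -/
def EvenDecomposable {V : Type*} (G : SimpleGraph V) : Prop :=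
  ∃ (k : ℕ) (Vs : ℕ → Set V),
    Vs 0 = Set.univ ∧ Vs k = ∅ ∧
    (∀ i < k, Vs (i + 1) ⊂ Vs i) ∧
    (∀ i < k, Even (edgesIn G (Vs i))) ∧
    (∀ i < k, ∀ u ∈ Vs i \ Vs (i + 1), ∀ v ∈ Vs i \ Vs (i + 1), ¬ G.Adj u v)

section Aux

variable {V : Type*} [Fintype V] (G : SimpleGraph V)

/-- Number of edges inside `S` that contain `v`. -/
noncomputable def degIn (S : Set V) (v : V) : ℕ :=
  {e ∈ G.edgeSet | (∀ w ∈ e, w ∈ S) ∧ v ∈ e}.ncard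

lemma edgesIn_split (S : Set V) (v : V) :
    edgesIn G S = edgesIn G (S \ {v}) + degIn G S v := by
  classical
  have hset : {e ∈ G.edgeSet | ∀ w ∈ e, w ∈ S}
      = {e ∈ G.edgeSet | ∀ w ∈ e, w ∈ S \ {v}}
        ∪ {e ∈ G.edgeSet | (∀ w ∈ e, w ∈ S) ∧ v ∈ e} := by
    ext e
    simp only [Set.mem_setOf_eq, Set.mem_union, Set.mem_diff, Set.mem_singleton_iff]
    constructor
    · rintro ⟨he, hS⟩
      by_cases hv : v ∈ e
      · exact Or.inr ⟨he, hS, hv⟩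
      · exact Or.inl ⟨he, fun w hw => ⟨hS w hw, fun h => hv (h ▸ hw)⟩⟩
    · rintro (⟨he, hS⟩ | ⟨he, hS, _⟩)
      · exact ⟨he, fun w hw => (hS w hw).1⟩
      · exact ⟨he, hS⟩
  have hdisj : Disjoint {e ∈ G.edgeSet | ∀ w ∈ e, w ∈ S \ {v}}
      {e ∈ G.edgeSet | (∀ w ∈ e, w ∈ S) ∧ v ∈ e} := by
    rw [Set.disjoint_left]
    rintro e ⟨_, hS⟩ ⟨_, _, hv⟩
    exact (hS v hv).2 rfl
  rw [edgesIn, hset, Set.ncard_union_eq hdisj (Set.toFinite _) (Set.toFinite _)]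
  rfl

lemma edgesIn_subsingleton (S : Set V) (h : S.Subsingleton) : edgesIn G S = 0 := by
  rw [edgesIn, Set.ncard_eq_zero (Set.toFinite _)]
  ext e
  simp only [Set.mem_setOf_eq, Set.mem_empty_iff_false, iff_false, not_and]
  intro he hS
  induction e with
  | h a b =>
    have hab : a ≠ b := G.ne_of_adj (G.mem_edgeSet.mp he)
    exact hab (h (hS a (Sym2.mem_mk_left a b)) (hS b (Sym2.mem_mk_right a b)))

lemma degIn_nonadj (S : Set V) (u v : V) (huv : u ≠ v) (hadj : ¬ G.Adj u v) :
    degIn G (S \ {u}) v = degIn G S v := by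
  unfold degIn
  congr 1
  ext e
  simp only [Set.mem_setOf_eq, Set.mem_diff, Set.mem_singleton_iff]
  constructor
  · rintro ⟨he, hS, hv⟩
    exact ⟨he, fun w hw => (hS w hw).1, hv⟩
  · rintro ⟨he, hS, hv⟩
    refine ⟨he, fun w hw => ⟨hS w hw, ?_⟩, hv⟩
    rintro rfl
    have hne : w ≠ v := huv
    have : e = s(w, v) := (Sym2.mem_and_mem_iff hne).mp ⟨hw, hv⟩
    rw [this] at he
    exact hadj (G.mem_edgeSet.mp he)

lemma degIn_clique (S : Set V) (v : V) (hv : v ∈ S)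
    (hclq : ∀ u ∈ S, ∀ w ∈ S, u ≠ w → G.Adj u w) :
    degIn G S v = (S \ {v}).ncard := by
  have himg : {e ∈ G.edgeSet | (∀ w ∈ e, w ∈ S) ∧ v ∈ e}
      = (fun w => s(v, w)) '' (S \ {v}) := by
    ext e
    simp only [Set.mem_setOf_eq, Set.mem_image, Set.mem_diff, Set.mem_singleton_iff]
    constructor
    · rintro ⟨he, hS, hve⟩
      refine ⟨Sym2.Mem.other hve, ⟨hS _ (Sym2.other_mem hve), ?_⟩, Sym2.other_spec hve⟩
      intro h
      have := Sym2.other_spec hve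
      rw [h] at this
      rw [← this] at he
      exact G.irrefl (G.mem_edgeSet.mp he)
    · rintro ⟨w, ⟨hwS, hwv⟩, rfl⟩
      refine ⟨G.mem_edgeSet.mpr (hclq v hv w hwS fun h => hwv h.symm), ?_,
        Sym2.mem_mk_left v w⟩
      intro x hx
      rcases Sym2.mem_iff.mp hx with rfl | rfl
      · exact hv
      · exact hwS
  rw [degIn, himg]
  apply Set.ncard_image_of_injOn
  intro a _ b _ hab
  exact Sym2.congr_right.mp hab

lemma clique_card_le (S : Set V) (hK4 : G.CliqueFree 4)
    (hclq : ∀ u ∈ S, ∀ w ∈ S, u ≠ w → G.Adj u w) : S.ncard ≤ 3 := by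
  classical
  by_contra h
  push_neg at h
  obtain ⟨t, htS, htc⟩ := Set.exists_subset_card_eq (show 4 ≤ S.ncard from h)
  have htfin : t.Finite := Set.toFinite t
  refine hK4 htfin.toFinset ?_
  rw [SimpleGraph.isNClique_iff]
  constructor
  · intro a ha b hb hab
    simp only [Set.Finite.coe_toFinset] at ha hb
    exact hclq a (htS ha) b (htS hb) hab
  · rw [← Set.ncard_eq_toFinset_card t htfin]
    exact htc

/-- The relativized statement used for the induction. -/
def EDFrom (S : Set V) : Prop :=
  ∃ (k : ℕ) (Vs : ℕ → Set V),
    Vs 0 = S ∧ Vs k = ∅ ∧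
    (∀ i < k, Vs (i + 1) ⊂ Vs i) ∧
    (∀ i < k, Even (edgesIn G (Vs i))) ∧
    (∀ i < k, ∀ u ∈ Vs i \ Vs (i + 1), ∀ v ∈ Vs i \ Vs (i + 1), ¬ G.Adj u v)

lemma EDFrom.step (S T : Set V) (hTS : T ⊆ S) (hTne : T.Nonempty)
    (hind : ∀ u ∈ T, ∀ v ∈ T, ¬ G.Adj u v) (hev : Even (edgesIn G S))
    (h : EDFrom G (S \ T)) : EDFrom G S := by
  obtain ⟨k, Vs, h0, hk, hssub, hev', hind'⟩ := h
  refine ⟨k + 1, fun i => match i with | 0 => S | (j+1) => Vs j, rfl, hk, ?_, ?_, ?_⟩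
  · intro i hi
    match i with
    | 0 =>
      show Vs 0 ⊂ S
      rw [h0]
      constructor
      · exact Set.diff_subset
      · intro hsub
        obtain ⟨t, ht⟩ := hTne
        exact (hsub (hTS ht)).2 ht
    | (j+1) => exact hssub j (by omega)
  · intro i hi
    match i with
    | 0 => exact hev
    | (j+1) => exact hev' j (by omega)
  · intro i hi
    match i with
    | 0 =>
      intro u hu v hv
      have hu : u ∈ S \ Vs 0 := hu
      have hv : v ∈ S \ Vs 0 := hv
      rw [h0] at hu hv
      have hu' : u ∈ T := by
        by_contra h'
        exact hu.2 ⟨hu.1, h'⟩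
      have hv' : v ∈ T := by
        by_contra h'
        exact hv.2 ⟨hv.1, h'⟩
      exact hind u hu' v hv'
    | (j+1) => exact hind' j (by omega)

lemma edFrom_of_even (hK4 : G.CliqueFree 4) :
    ∀ (n : ℕ) (S : Set V), S.ncard = n → Even (edgesIn G S) → EDFrom G S := by
  intro n
  induction n using Nat.strong_induction_on with
  | _ n IH =>
    intro S hcard hev
    rcases Set.eq_empty_or_nonempty S with rfl | hSne
    · exact ⟨0, fun _ => ∅, rfl, rfl, fun i hi => absurd hi (Nat.not_lt_zero i),
        fun i hi => absurd hi (Nat.not_lt_zero i), fun i hi => absurd hi (Nat.not_lt_zero i)⟩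
    have hrec : ∀ T : Set V, T ⊆ S → T.Nonempty →
        (∀ u ∈ T, ∀ v ∈ T, ¬ G.Adj u v) → Even (edgesIn G (S \ T)) → EDFrom G S := by
      intro T hTS hTne hind hev'
      obtain ⟨t, ht⟩ := hTne
      have hlt : (S \ T).ncard < n := by
        rw [← hcard]
        apply Set.ncard_lt_ncard _ (Set.toFinite S)
        constructor
        · exact Set.diff_subset
        · intro hsub
          exact (hsub (hTS ht)).2 ht
      exact EDFrom.step G S T hTS ⟨t, ht⟩ hind hev
        (IH _ hlt _ rfl hev')
    by_cases h1 : ∃ v ∈ S, Even (degIn G S v)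
    · obtain ⟨v, hvS, hdeg⟩ := h1
      refine hrec {v} (Set.singleton_subset_iff.mpr hvS) ⟨v, rfl⟩ ?_ ?_
      · rintro u rfl w rfl
        exact G.irrefl
      · have hsplit := edgesIn_split G S v
        rw [hsplit, Nat.even_add] at hev
        exact hev.mpr hdeg
    · push_neg at h1
      by_cases h2 : ∃ u ∈ S, ∃ v ∈ S, u ≠ v ∧ ¬ G.Adj u v
      · obtain ⟨u, huS, v, hvS, huv, hadj⟩ := h2
        have hadj' : ¬ G.Adj v u := fun h => hadj h.symm
        refine hrec {u, v} ?_ ⟨u, Or.inl rfl⟩ ?_ ?_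
        · rintro x (rfl | rfl)
          exacts [huS, hvS]
        · rintro x (rfl | rfl) y (rfl | rfl)
          exacts [G.irrefl, hadj, hadj', G.irrefl]
        · have h1u : Odd (degIn G S u) := Nat.not_even_iff_odd.mp (h1 u huS)
          have h1v : Odd (degIn G S v) := Nat.not_even_iff_odd.mp (h1 v hvS)
          have hs1 := edgesIn_split G S u
          have hs2 := edgesIn_split G (S \ {u}) v
          have hd : degIn G (S \ {u}) v = degIn G S v := degIn_nonadj G S u v huv hadj
          have hE : S \ {u, v} = (S \ {u}) \ {v} := by
            ext x
            simp only [Set.mem_diff, Set.mem_insert_iff, Set.mem_singleton_iff]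
            tauto
          rw [hE]
          obtain ⟨a, ha⟩ := hev
          obtain ⟨b, hb⟩ := h1u
          obtain ⟨c, hc⟩ := h1v
          rw [hd, hc] at hs2
          rw [hb, ha] at hs1
          refine ⟨(edgesIn G ((S \ {u}) \ {v}) ) / 2, ?_⟩
          omega
      · exfalso
        push_neg at h2
        obtain ⟨v, hvS⟩ := hSne
        have hdeg : Odd (degIn G S v) := Nat.not_even_iff_odd.mp (h1 v hvS)
        have hclq := degIn_clique G S v hvS h2
        have hcard3 := clique_card_le G S hK4 h2
        have hsplit := edgesIn_split G S v
        have hOddE : Odd (edgesIn G (S \ {v})) := by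
          obtain ⟨a, ha⟩ := hev
          obtain ⟨b, hb⟩ := hdeg
          rw [ha, hb] at hsplit
          refine ⟨(edgesIn G (S \ {v}) - 1) / 2, ?_⟩
          omega
        have hne0 : edgesIn G (S \ {v}) ≠ 0 := by
          intro h
          rw [h] at hOddE
          have := Nat.odd_iff.mp hOddE
          omega
        have hnsub : ¬ (S \ {v}).Subsingleton := fun h =>
          hne0 (edgesIn_subsingleton G _ h)
        have h2le : 2 ≤ (S \ {v}).ncard := by
          by_contra h
          push_neg at h
          interval_cases hc : (S \ {v}).ncard
          · exact hnsub ((Set.ncard_eq_zero (Set.toFinite _)).mp hc ▸ Set.subsingleton_empty)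
          · obtain ⟨a, ha⟩ := (Set.ncard_eq_one).mp hc
            exact hnsub (ha ▸ Set.subsingleton_singleton)
        have hSc : (S \ {v}).ncard + 1 = S.ncard :=
          Set.ncard_diff_singleton_add_one hvS (Set.toFinite _)
        have : (S \ {v}).ncard = 2 := by omega
        rw [hclq, this] at hdeg
        have := Nat.odd_iff.mp hdeg
        omega

end Aux

/-- Every finite graph with an even number of edges and no `K₄` is even-decomposable. -/
theorem k4_free_even_decomposable {V : Type*} [Fintype V] (G : SimpleGraph V)
    (heven : Even G.edgeSet.ncard) (hK4 : G.CliqueFree 4) :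
    EvenDecomposable G := by
  have huniv : edgesIn G Set.univ = G.edgeSet.ncard := by
    unfold edgesIn
    congr 1
    ext e
    simp
  have h := edFrom_of_even G hK4 (Set.univ : Set V).ncard Set.univ rfl
    (by rw [huniv]; exact heven)
  obtain ⟨k, Vs, h0, hk, h1, h2, h3⟩ := h
  exact ⟨k, Vs, h0, hk, h1, h2, h3⟩
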